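/- Let V : ℤ → ℝ be periodic with period p ≥ 1 and let Δ be its discriminant. Then the set {E ∈ ℝ : |Δ(E)| ≤ 2} is the union of p closed intervals with nonempty interior (the bands) such that on each band Δ is either strictly increasing or strictly decreasing, and Δ maps each band onto [−2,2]. -/

import Mathlib

/-- The transfer matrix over `n` sites: `T_n^{(E,V)} = S_{n-1} ⋯ S_0`, where
`S_i^{(E,V)} = !![E - V i, -1; 1, 0]`. -/
def transferMatrix (E : ℝ) (V : ℤ → ℝ) : ℕ → Matrix (Fin 2) (Fin 2) ℝ
  | 0 => 1
  | n + 1 => !![E - V n, -1; 1, 0] * transferMatrix E V n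

/-- The discriminant `Δ(E) = tr T_p^{(E,V)}` of a `p`-periodic potential. -/
def discriminant (V : ℤ → ℝ) (p : ℕ) (E : ℝ) : ℝ :=
  (transferMatrix E V p).trace

namespace Statement10Aux

open Polynomial Matrix

/-- Polynomial version of the one-step transfer matrix. -/
noncomputable def Smat (V : ℤ → ℝ) (n : ℕ) : Matrix (Fin 2) (Fin 2) ℝ[X] :=
  !![X - C (V n), -1; 1, 0]

/-- Polynomial version of the transfer matrix. -/
noncomputable def Tmat (V : ℤ → ℝ) : ℕ → Matrix (Fin 2) (Fin 2) ℝ[X]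
  | 0 => 1
  | n + 1 => Smat V n * Tmat V n

lemma Smat_map (V : ℤ → ℝ) (n : ℕ) (E : ℝ) :
    (Smat V n).map (evalRingHom E) = !![E - V n, -1; 1, 0] := by
  ext i j
  fin_cases i <;> fin_cases j <;> simp [Smat]

lemma Tmat_map (V : ℤ → ℝ) (E : ℝ) (n : ℕ) :
    (Tmat V n).map (evalRingHom E) = transferMatrix E V n := by
  induction n with
  | zero => simp [Tmat, transferMatrix, Matrix.map_one]
  | succ n ih =>
      rw [Tmat, transferMatrix, Matrix.map_mul, ih, Smat_map]

/-- The discriminant as a polynomial. -/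
noncomputable def Dpoly (V : ℤ → ℝ) (p : ℕ) : ℝ[X] := (Tmat V p).trace

lemma trace_map (A : Matrix (Fin 2) (Fin 2) ℝ[X]) (E : ℝ) :
    (A.map (evalRingHom E)).trace = eval E A.trace := by
  simp [Matrix.trace_fin_two]

lemma discriminant_eval (V : ℤ → ℝ) (p : ℕ) (E : ℝ) :
    discriminant V p E = eval E (Dpoly V p) := by
  rw [discriminant, Dpoly, ← trace_map, Tmat_map]

lemma det_Smat (V : ℤ → ℝ) (n : ℕ) : (Smat V n).det = 1 := by
  simp [Smat, Matrix.det_fin_two]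

lemma det_Tmat (V : ℤ → ℝ) (n : ℕ) : (Tmat V n).det = 1 := by
  induction n with
  | zero => simp [Tmat]
  | succ n ih => rw [Tmat, Matrix.det_mul, ih, det_Smat, one_mul]

lemma Smat_mul_apply (V : ℤ → ℝ) (n : ℕ) (A : Matrix (Fin 2) (Fin 2) ℝ[X]) :
    (Smat V n * A) 0 0 = (X - C (V n)) * A 0 0 - A 1 0 ∧
    (Smat V n * A) 0 1 = (X - C (V n)) * A 0 1 - A 1 1 ∧
    (Smat V n * A) 1 0 = A 0 0 ∧ (Smat V n * A) 1 1 = A 0 1 := by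
  refine ⟨?_, ?_, ?_, ?_⟩ <;>
    simp [Smat, Matrix.mul_apply, Fin.sum_univ_two] <;> ring

lemma Tmat_entries (V : ℤ → ℝ) (n : ℕ) (hn : 1 ≤ n) :
    Monic ((Tmat V n) 0 0) ∧ degree ((Tmat V n) 0 0) = (n : ℕ) ∧
    degree ((Tmat V n) 0 1) < (n : ℕ) ∧ degree ((Tmat V n) 1 0) < (n : ℕ) ∧
    degree ((Tmat V n) 1 1) < (n : ℕ) := by
  induction n with
  | zero => omega
  | succ n ih =>
      rcases Nat.eq_or_lt_of_le hn with h1 | h1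
      · -- n + 1 = 1
        have hn0 : n = 0 := by omega
        subst hn0
        have : Tmat V 1 = Smat V 0 := by
          rw [Tmat, Tmat, mul_one]
        rw [this]
        refine ⟨?_, ?_, ?_, ?_, ?_⟩ <;>
          simp [Smat, monic_X_sub_C, degree_X_sub_C] <;>
          exact bot_lt_iff_ne_bot.mpr (by simp)
      · have hn1 : 1 ≤ n := by omega
        obtain ⟨hmon, hdeg, h01, h10, h11⟩ := ih hn1
        obtain ⟨e00, e01, e10, e11⟩ := Smat_mul_apply V n (Tmat V n)
        have hTn : Tmat V (n + 1) = Smat V n * Tmat V n := rfl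
        have hXC : Monic (X - C (V (n:ℤ))) := monic_X_sub_C _
        have hmul : Monic ((X - C (V (n:ℤ))) * (Tmat V n) 0 0) := hXC.mul hmon
        have hdegmul : degree ((X - C (V (n:ℤ))) * (Tmat V n) 0 0) = ((n+1 : ℕ) : WithBot ℕ) := by
          rw [degree_mul, degree_X_sub_C, hdeg]
          norm_cast
          omega
        constructor
        · rw [hTn, e00, sub_eq_add_neg]
          exact hmul.add_of_left (by rw [hdegmul, degree_neg]; exact lt_of_lt_of_le h10 (by norm_cast; omega))
        constructor
        · rw [hTn, e00, sub_eq_add_neg, degree_add_eq_left_of_degree_lt, hdegmul]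
          rw [hdegmul, degree_neg]
          exact lt_of_lt_of_le h10 (by norm_cast; omega)
        constructor
        · rw [hTn, e01]
          refine lt_of_le_of_lt (degree_sub_le _ _) (max_lt ?_ ?_)
          · rw [degree_mul, degree_X_sub_C]
            rcases eq_or_ne ((Tmat V n) 0 1) 0 with h | h
            · rw [h, degree_zero]
              rw [show (1 : WithBot ℕ) + ⊥ = ⊥ from rfl]
              exact bot_lt_iff_ne_bot.mpr (by simp)
            · have : degree ((Tmat V n) 0 1) ≤ ((n-1 : ℕ) : WithBot ℕ) := by
                rcases degree_eq_natDegree h ▸ h01 with h'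
                have := (degree_eq_natDegree h) ▸ h01
                rw [degree_eq_natDegree h] at h01 ⊢
                norm_cast at h01 ⊢
                omega
              calc (1 : WithBot ℕ) + degree ((Tmat V n) 0 1) ≤ 1 + ((n-1:ℕ) : WithBot ℕ) := by
                    exact add_le_add le_rfl this
                _ < ((n+1 : ℕ) : WithBot ℕ) := by norm_cast; omega
          · exact lt_trans h11 (by norm_cast; omega)
        constructor
        · rw [hTn, e10, hdeg]; norm_cast; omega
        · rw [hTn, e11]; exact lt_trans h01 (by norm_cast; omega)
  

lemma Dpoly_monic (V : ℤ → ℝ) (p : ℕ) (hp : 1 ≤ p) : Monic (Dpoly V p) := by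
  obtain ⟨hmon, hdeg, _, _, h11⟩ := Tmat_entries V p hp
  rw [Dpoly, Matrix.trace_fin_two]
  exact hmon.add_of_left (by rw [hdeg]; exact h11)

lemma Dpoly_degree (V : ℤ → ℝ) (p : ℕ) (hp : 1 ≤ p) : degree (Dpoly V p) = (p : ℕ) := by
  obtain ⟨hmon, hdeg, _, _, h11⟩ := Tmat_entries V p hp
  rw [Dpoly, Matrix.trace_fin_two, degree_add_eq_left_of_degree_lt (by rw [hdeg]; exact h11), hdeg]

lemma Dpoly_natDegree (V : ℤ → ℝ) (p : ℕ) (hp : 1 ≤ p) : natDegree (Dpoly V p) = p :=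
  natDegree_eq_of_degree_eq_some (Dpoly_degree V p hp)


/-! ### Shifted potentials and the derivative formula -/

def shifted (V : ℤ → ℝ) (k : ℕ) : ℤ → ℝ := fun n => V (n + k)

lemma Smat_shifted (V : ℤ → ℝ) (k m : ℕ) :
    Smat (shifted V k) m = Smat V (m + k) := by
  ext i j
  fin_cases i <;> fin_cases j <;> simp [Smat, shifted] <;> norm_cast

lemma shifted_shifted (V : ℤ → ℝ) (k j : ℕ) :
    shifted (shifted V k) j = shifted V (j + k) := by
  funext n
  simp only [shifted]
  congr 1
  push_cast
  ring

lemma Tmat_add (V : ℤ → ℝ) (k : ℕ) : ∀ m : ℕ,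
    Tmat V (m + k) = Tmat (shifted V k) m * Tmat V k
  | 0 => by rw [Nat.zero_add]; exact (one_mul _).symm
  | m + 1 => by
      have : m + 1 + k = (m + k) + 1 := by omega
      rw [this, Tmat, Tmat_add V k m, Tmat, Smat_shifted, mul_assoc]

/-- Decomposition of the transfer matrix around site `k`. -/
lemma Tmat_decomp (V : ℤ → ℝ) (p k : ℕ) (hk : k < p) :
    Tmat V p = Tmat (shifted V (k + 1)) (p - (k + 1)) * Smat V k * Tmat V k := by
  have h1 : p = (p - k) + k := by omega
  have h2 : p - k = (p - (k + 1)) + 1 := by omega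
  calc Tmat V p = Tmat V ((p - k) + k) := by rw [← h1]
    _ = Tmat (shifted V k) (p - k) * Tmat V k := Tmat_add V k (p - k)
    _ = Tmat (shifted V (k+1)) (p - (k+1)) * Smat V k * Tmat V k := by
        have e1 : Tmat (shifted V k) (p - k)
            = Tmat (shifted (shifted V k) 1) (p - (k+1)) * Tmat (shifted V k) 1 := by
          rw [show p - k = p - (k+1) + 1 by omega]
          exact Tmat_add (shifted V k) 1 (p - (k+1))
        have e2 : Tmat (shifted V k) 1 = Smat V k := by
          show Smat (shifted V k) 0 * 1 = Smat V k
          rw [mul_one, Smat_shifted, Nat.zero_add]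
        rw [e1, e2, shifted_shifted, show 1 + k = k + 1 by omega]

noncomputable def e11 : Matrix (Fin 2) (Fin 2) ℝ[X] := !![1, 0; 0, 0]

lemma Dmap_mul (A B : Matrix (Fin 2) (Fin 2) ℝ[X]) :
    (A * B).map (derivative : ℝ[X] → ℝ[X])
      = A.map derivative * B + A * B.map derivative := by
  ext i j
  simp [Matrix.mul_apply, Matrix.map_apply, derivative_mul, Finset.sum_add_distrib]
  ring

lemma Dmap_Smat (V : ℤ → ℝ) (n : ℕ) :
    (Smat V n).map (derivative : ℝ[X] → ℝ[X]) = e11 := by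
  ext i j
  fin_cases i <;> fin_cases j <;> simp [Smat, e11]

lemma Dmap_one : ((1 : Matrix (Fin 2) (Fin 2) ℝ[X])).map (derivative : ℝ[X] → ℝ[X]) = 0 := by
  ext i j
  simp [Matrix.map_apply, Matrix.one_apply]
  split_ifs <;> simp

lemma Dmap_Tmat (V : ℤ → ℝ) : ∀ n : ℕ,
    (Tmat V n).map (derivative : ℝ[X] → ℝ[X])
      = ∑ k ∈ Finset.range n, Tmat (shifted V (k + 1)) (n - (k + 1)) * e11 * Tmat V k
  | 0 => by simp [Tmat, Dmap_one]
  | n + 1 => by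
      rw [Tmat, Dmap_mul, Dmap_Smat, Dmap_Tmat V n, Finset.mul_sum, Finset.sum_range_succ]
      have hlast : Tmat (shifted V (n + 1)) (n + 1 - (n + 1)) * e11 * Tmat V n
          = e11 * Tmat V n := by
        rw [Nat.sub_self]
        show (1 : Matrix (Fin 2) (Fin 2) ℝ[X]) * e11 * Tmat V n = _
        rw [one_mul]
      rw [hlast, add_comm]
      refine congrArg (· + e11 * Tmat V n) ?_
      apply Finset.sum_congr rfl
      intro k hk
      have hk' : k < n := Finset.mem_range.mp hk
      rw [← mul_assoc, ← mul_assoc]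
      congr 2
      have h2 : n - (k + 1) + (k + 1) = n := by omega
      have h3 : n + 1 - (k + 1) = (n - (k + 1)) + 1 := by omega
      rw [h3, Tmat]
      rw [show Smat (shifted V (k+1)) (n - (k+1)) = Smat V n by
        rw [Smat_shifted, h2]]

lemma trace_mul_e11 (A B : Matrix (Fin 2) (Fin 2) ℝ[X]) :
    (A * e11 * B).trace = (B * A) 0 0 := by
  simp [Matrix.trace_fin_two, Matrix.mul_apply, Fin.sum_univ_two, e11]
  ring

lemma derivative_Dpoly (V : ℤ → ℝ) (p : ℕ) :
    derivative (Dpoly V p)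
      = ∑ k ∈ Finset.range p, (Tmat V k * Tmat (shifted V (k + 1)) (p - (k + 1))) 0 0 := by
  have h1 : derivative (Dpoly V p) = ((Tmat V p).map (derivative : ℝ[X] → ℝ[X])).trace := by
    rw [Dpoly, Matrix.trace_fin_two, Matrix.trace_fin_two]
    simp [Matrix.map_apply]
  rw [h1, Dmap_Tmat, Matrix.trace_sum]
  apply Finset.sum_congr rfl
  intro k _
  exact trace_mul_e11 _ _


/-! ### The sign lemma: conjugation preserves the sign of the (0,1) entry
for elliptic `SL₂(ℝ)` matrices. -/

lemma entry_formula (M g : Matrix (Fin 2) (Fin 2) ℝ) :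
    (g * M * adjugate g) 0 1
      = M 0 1 * (g 0 0)^2 + (M 1 1 - M 0 0) * (g 0 0) * (g 0 1) - M 1 0 * (g 0 1)^2 := by
  rw [Matrix.adjugate_fin_two]
  simp [Matrix.mul_apply, Fin.sum_univ_two]
  ring

lemma offdiag_ne_zero (M : Matrix (Fin 2) (Fin 2) ℝ) (hM : M.det = 1)
    (htr : (M.trace)^2 < 4) : M 0 1 ≠ 0 := by
  rw [Matrix.det_fin_two] at hM
  rw [Matrix.trace_fin_two] at htr
  intro h
  rw [h] at hM
  nlinarith [sq_nonneg (M 0 0 - M 1 1)]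

lemma sign_lemma (M g : Matrix (Fin 2) (Fin 2) ℝ) (hM : M.det = 1) (hg : g.det = 1)
    (htr : (M.trace)^2 < 4) : 0 < M 0 1 * ((g * M * adjugate g) 0 1) := by
  rw [entry_formula]
  have hb : M 0 1 ≠ 0 := offdiag_ne_zero M hM htr
  rw [Matrix.det_fin_two] at hM hg
  rw [Matrix.trace_fin_two] at htr
  set a := M 0 0; set b := M 0 1; set c := M 1 0; set d := M 1 1
  set al := g 0 0; set be := g 0 1
  rcases eq_or_ne be 0 with h0 | h0
  · have hal : al ≠ 0 := by
      intro h1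
      rw [h0, h1] at hg
      simp at hg
    rw [h0]
    have : b * (b * al ^ 2 + (d - a) * al * 0 - c * 0 ^ 2) = (b * al)^2 := by ring
    rw [this]
    positivity
  · nlinarith [sq_nonneg (2 * b * al + (d - a) * be), sq_pos_of_ne_zero h0,
      mul_pos (sub_pos.mpr htr) (sq_pos_of_ne_zero h0)]

/-- Key analytic input: the discriminant has nonvanishing derivative inside the bands. -/
lemma deriv_ne_zero (V : ℤ → ℝ) (p : ℕ) (hp : 1 ≤ p) (E : ℝ)
    (h : |discriminant V p E| < 2) : eval E (derivative (Dpoly V p)) ≠ 0 := by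
  set Mp : Matrix (Fin 2) (Fin 2) ℝ := (Tmat V p).map (evalRingHom E) with hMp
  have hdet : Mp.det = 1 := by
    have h2 := (evalRingHom E).map_det (Tmat V p)
    rw [RingHom.mapMatrix_apply] at h2
    rw [hMp, ← h2, det_Tmat]
    simp
  have htr : (Mp.trace)^2 < 4 := by
    have : Mp.trace = discriminant V p E := by
      rw [hMp, trace_map, ← Dpoly, ← discriminant_eval]
    rw [this]
    rcases abs_lt.mp h with ⟨h1, h2⟩
    nlinarith
  have hterm : ∀ k ∈ Finset.range p,
      0 < Mp 0 1 * (-(eval E ((Tmat V k * Tmat (shifted V (k + 1)) (p - (k + 1))) 0 0))) := by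
    intro k hk
    have hk' : k < p := Finset.mem_range.mp hk
    set G : Matrix (Fin 2) (Fin 2) ℝ := (Tmat V k).map (evalRingHom E) with hG
    set H : Matrix (Fin 2) (Fin 2) ℝ :=
      (Tmat (shifted V (k + 1)) (p - (k + 1))).map (evalRingHom E) with hH
    set s : Matrix (Fin 2) (Fin 2) ℝ := (Smat V k).map (evalRingHom E) with hs
    have hdetG : G.det = 1 := by
      have h2 := (evalRingHom E).map_det (Tmat V k)
      rw [RingHom.mapMatrix_apply] at h2
      rw [hG, ← h2, det_Tmat]
      simp
    have hdecomp : Mp = H * s * G := by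
      rw [hMp, Tmat_decomp V p k hk', Matrix.map_mul, Matrix.map_mul]
    have hGH : eval E ((Tmat V k * Tmat (shifted V (k + 1)) (p - (k + 1))) 0 0)
        = (G * H) 0 0 := by
      rw [hG, hH, ← Matrix.map_mul]
      simp [Matrix.map_apply]
    have hmain : (G * Mp * adjugate G) 0 1 = -((G * H) 0 0) := by
      rw [hdecomp]
      have : G * (H * s * G) * adjugate G = (G * H) * s * (G * adjugate G) := by
        noncomm_ring
      rw [this, Matrix.mul_adjugate, hdetG, one_smul, mul_one]
      have hs' : s = !![E - V k, -1; 1, 0] := by rw [hs, Smat_map]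
      rw [hs']
      simp [Matrix.mul_apply, Fin.sum_univ_two]
    have := sign_lemma Mp G hdet hdetG htr
    rw [hmain] at this
    rw [hGH]
    linarith
  have hsum : 0 < Mp 0 1 * (-(eval E (derivative (Dpoly V p)))) := by
    rw [derivative_Dpoly]
    rw [eval_finset_sum]
    rw [← Finset.sum_neg_distrib, Finset.mul_sum]
    apply Finset.sum_pos' (fun k hk => le_of_lt (hterm k hk))
    exact ⟨0, Finset.mem_range.mpr hp, hterm 0 (Finset.mem_range.mpr hp)⟩
  intro hzero
  rw [hzero] at hsum
  simp at hsum


/-! ### All complex zeros of the discriminant are real -/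

open Complex in
lemma im_eq_zero (V : ℤ → ℝ) (p : ℕ) (hp : 1 ≤ p) (hV : ∀ n : ℤ, V (n + p) = V n)
    (z : ℂ) (hz : aeval z (Dpoly V p) = 0) : z.im = 0 := by
  classical
  set f : ℝ[X] →+* ℂ := (aeval z : ℝ[X] →ₐ[ℝ] ℂ).toRingHom with hf
  set TC : ℕ → Matrix (Fin 2) (Fin 2) ℂ := fun n => (Tmat V n).map f with hTC
  have hTC0 : TC 0 = 1 := by
    rw [hTC]
    show ((1 : Matrix (Fin 2) (Fin 2) ℝ[X])).map f = 1
    exact Matrix.map_one f (map_zero f) (map_one f)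
  have hStep : ∀ n : ℕ, TC (n + 1) = !![z - (V n : ℂ), -1; 1, 0] * TC n := by
    intro n
    show (Tmat V (n+1)).map f = _
    rw [Tmat, Matrix.map_mul]
    congr 1
    ext i j
    fin_cases i <;> fin_cases j <;> simp [Smat, hf]
  have hdet : (TC p).det = 1 := by
    have h2 := f.map_det (Tmat V p)
    rw [RingHom.mapMatrix_apply] at h2
    rw [hTC]
    show ((Tmat V p).map f).det = 1
    rw [← h2, det_Tmat]
    exact _root_.map_one f
  have htrace : (TC p).trace = 0 := by
    have : (TC p).trace = aeval z (Dpoly V p) := by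
      rw [hTC, Dpoly]
      simp [Matrix.trace_fin_two, Matrix.map_apply, hf]
    rw [this, hz]
  have hsing : ((TC p) - Complex.I • 1).det = 0 := by
    rw [Matrix.det_fin_two]
    have hd := hdet; rw [Matrix.det_fin_two] at hd
    have ht := htrace; rw [Matrix.trace_fin_two] at ht
    simp only [Matrix.sub_apply, Matrix.smul_apply, Matrix.one_apply_eq,
      Matrix.one_apply_ne (by decide : (0 : Fin 2) ≠ 1),
      Matrix.one_apply_ne (by decide : (1 : Fin 2) ≠ 0), smul_eq_mul, mul_one, mul_zero,
      sub_zero]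
    linear_combination hd - Complex.I * ht + Complex.I_sq
  obtain ⟨v, hv0, hveq⟩ := Matrix.exists_mulVec_eq_zero_iff.mpr hsing
  have heig : (TC p) *ᵥ v = Complex.I • v := by
    rw [Matrix.sub_mulVec, Matrix.smul_mulVec, Matrix.one_mulVec] at hveq
    exact sub_eq_zero.mp hveq
  set w : ℕ → Fin 2 → ℂ := fun n => (TC n) *ᵥ v with hw
  have hw0 : w 0 = v := by rw [hw]; simp only [hTC0, Matrix.one_mulVec]
  have hwrec : ∀ n : ℕ, w (n + 1) = !![z - (V n : ℂ), -1; 1, 0] *ᵥ (w n) := by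
    intro n
    show (TC (n+1)) *ᵥ v = _
    rw [hStep, ← Matrix.mulVec_mulVec]
  have hcomp0 : ∀ n : ℕ, w (n + 1) 0 = (z - (V n : ℂ)) * w n 0 - w n 1 := by
    intro n
    rw [hwrec n]
    simp [Matrix.mulVec, dotProduct, Fin.sum_univ_two, Matrix.vecHead, Matrix.vecTail]
    ring
  have hcomp1 : ∀ n : ℕ, w (n + 1) 1 = w n 0 := by
    intro n
    rw [hwrec n]
    simp [Matrix.mulVec, dotProduct, Fin.sum_univ_two, Matrix.vecHead, Matrix.vecTail]
  have hper : ∀ n : ℕ, w (n + p) = Complex.I • w n := by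
    intro n
    induction n with
    | zero =>
        rw [Nat.zero_add, hw0]
        exact heig
    | succ n ih =>
        have h1 : n + 1 + p = (n + p) + 1 := by omega
        have h2 : (V ((n + p : ℕ) : ℤ) : ℂ) = (V (n : ℤ) : ℂ) := by
          have := hV (n : ℤ)
          push_cast
          rw [this]
        rw [h1, hwrec (n + p), hwrec n, ih, Matrix.mulVec_smul]
        congr 1
        rw [h2]
  -- the quadratic form computation
  set u : ℕ → ℂ := fun n => w n 0 with hu
  set g : ℕ → ℂ := fun m => (starRingEnd ℂ) (w m 1) * w m 0 with hg
  have hgp : g p = g 0 := by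
    have h0 : w p = Complex.I • w 0 := by
      have := hper 0
      rwa [Nat.zero_add] at this
    rw [hg]
    simp only [h0, Pi.smul_apply, smul_eq_mul, _root_.map_mul, Complex.conj_I]
    ring_nf
    rw [Complex.I_sq]
    ring
  have hA : ∑ n ∈ Finset.range p, (starRingEnd ℂ) (u n) * w (n + 1) 0
      = ∑ n ∈ Finset.range p, g n := by
    have e1 : ∀ n : ℕ, (starRingEnd ℂ) (u n) * w (n + 1) 0 = g (n + 1) := by
      intro n
      rw [hg, hu]
      simp only [hcomp1]
    simp only [e1]
    have e2 := Finset.sum_range_succ' g p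
    have e3 := Finset.sum_range_succ g p
    rw [e3] at e2
    -- e2 : ∑ range p g + g p = ∑ range p (g ∘ succ) + g 0
    rw [hgp] at e2
    exact (add_right_cancel e2).symm
  have hkey : ∀ n ∈ Finset.range p,
      (z - (V n : ℂ)) * ((Complex.normSq (u n) : ℝ) : ℂ)
        = (starRingEnd ℂ) (u n) * w (n + 1) 0 + (starRingEnd ℂ) (g n) := by
    intro n _
    have h1 : (starRingEnd ℂ) (g n) = (starRingEnd ℂ) (u n) * w n 1 := by
      rw [hg, hu]
      simp only [_root_.map_mul, Complex.conj_conj]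
      ring
    rw [h1]
    have h2 := hcomp0 n
    have h3 : ((Complex.normSq (u n) : ℝ) : ℂ) = (starRingEnd ℂ) (u n) * u n := by
      rw [mul_comm]
      exact (Complex.mul_conj (u n)).symm
    rw [h3]
    have h4 : w (n + 1) 0 = (z - (V n : ℂ)) * u n - w n 1 := h2
    linear_combination (-(starRingEnd ℂ) (u n)) * h4
  have hsum : (∑ n ∈ Finset.range p, (z - (V n : ℂ)) * ((Complex.normSq (u n) : ℝ) : ℂ))
      = (∑ n ∈ Finset.range p, g n) + (starRingEnd ℂ) (∑ n ∈ Finset.range p, g n) := by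
    rw [Finset.sum_congr rfl hkey, Finset.sum_add_distrib, hA, map_sum]
  have him2 : z.im * (∑ n ∈ Finset.range p, Complex.normSq (u n)) = 0 := by
    have him : (∑ n ∈ Finset.range p,
        (z - (V n : ℂ)) * ((Complex.normSq (u n) : ℝ) : ℂ)).im = 0 := by
      rw [hsum, Complex.add_conj]
      simp
    have e5 : (∑ n ∈ Finset.range p,
        (z - (V n : ℂ)) * ((Complex.normSq (u n) : ℝ) : ℂ)).im
        = ∑ n ∈ Finset.range p, z.im * Complex.normSq (u n) := by
      rw [Complex.im_sum]
      apply Finset.sum_congr rfl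
      intro n _
      simp [Complex.mul_im]
    rw [e5, ← Finset.mul_sum] at him
    exact him
  have hSpos : 0 < ∑ n ∈ Finset.range p, Complex.normSq (u n) := by
    have hnn : ∀ n ∈ Finset.range p, 0 ≤ Complex.normSq (u n) :=
      fun n _ => Complex.normSq_nonneg _
    rcases (Finset.sum_nonneg hnn).lt_or_eq with h | h
    · exact h
    · exfalso
      have hzero : ∀ n ∈ Finset.range p, Complex.normSq (u n) = 0 :=
        (Finset.sum_eq_zero_iff_of_nonneg hnn).mp h.symm
      have hu0 : ∀ n, n < p → u n = 0 :=
        fun n hn => Complex.normSq_eq_zero.mp (hzero n (Finset.mem_range.mpr hn))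
      have h0 : w p = Complex.I • w 0 := by
        have := hper 0
        rwa [Nat.zero_add] at this
      have hwp : w p = 0 := by
        funext i
        fin_cases i
        · show w p 0 = 0
          rw [h0]
          have : w 0 0 = u 0 := rfl
          simp only [Pi.smul_apply, smul_eq_mul, this, hu0 0 hp, mul_zero]
        · show w p 1 = 0
          have h1 : p = (p - 1) + 1 := by omega
          rw [h1, hcomp1]
          exact hu0 (p - 1) (by omega)
      rw [hw0, hwp] at h0
      apply hv0
      funext i
      have := congrFun h0 i
      simp only [Pi.zero_apply, Pi.smul_apply, smul_eq_mul] at this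
      have hI : Complex.I ≠ 0 := Complex.I_ne_zero
      field_simp at this
      rw [(mul_eq_zero.mp this.symm).resolve_left hI]
      rfl
  rcases mul_eq_zero.mp him2 with h | h
  · exact h
  · exact absurd h (ne_of_gt hSpos)

/-- The discriminant polynomial has `p` distinct real roots. -/
lemma exists_sorted_roots (V : ℤ → ℝ) (p : ℕ) (hp : 1 ≤ p) (hV : ∀ n : ℤ, V (n + p) = V n) :
    ∃ r : Fin p → ℝ, StrictMono r ∧ ∀ i, eval (r i) (Dpoly V p) = 0 := by
  classical
  set q := (Dpoly V p).map (algebraMap ℝ ℂ) with hq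
  have hq0 : q ≠ 0 := ((Dpoly_monic V p hp).map _).ne_zero
  have hqdeg : q.natDegree = p := by
    rw [hq, (Dpoly_monic V p hp).natDegree_map, Dpoly_natDegree V p hp]
  have hsplit : Splits q :=
    IsAlgClosed.splits q
  have hcard : Multiset.card q.roots = p := by
    rw [← hqdeg]
    exact splits_iff_card_roots.mp hsplit
  have hcast : ∀ (P : ℝ[X]) (ξ : ℂ), ξ.im = 0 →
      eval ξ (P.map (algebraMap ℝ ℂ)) = ((eval ξ.re P : ℝ) : ℂ) := by
    intro P ξ him
    have hξx : ((ξ.re : ℝ) : ℂ) = ξ := by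
      apply Complex.ext
      · simp
      · simp [him]
    have h6 := Polynomial.eval₂_at_apply (algebraMap ℝ ℂ) ξ.re (p := P)
    rw [Complex.coe_algebraMap] at h6
    rw [Polynomial.eval_map, ← hξx]
    exact h6
  have htrans : ∀ ξ : ℂ, eval ξ q = 0 → ξ.im = 0 ∧ eval ξ.re (Dpoly V p) = 0 := by
    intro ξ hξ
    have haev : aeval ξ (Dpoly V p) = 0 := by
      rwa [hq, Polynomial.eval_map, ← aeval_def] at hξ
    have him := im_eq_zero V p hp hV ξ haev
    refine ⟨him, ?_⟩
    rw [hq, hcast (Dpoly V p) ξ him] at hξ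
    exact_mod_cast hξ
  have hroots_im : ∀ ξ ∈ q.roots, ξ.im = 0 := by
    intro ξ hξ
    exact (htrans ξ ((mem_roots hq0).mp hξ)).1
  have hnodup : q.roots.Nodup := by
    rw [Multiset.nodup_iff_count_le_one]
    intro ξ
    by_contra hcnt
    push_neg at hcnt
    have hmem : ξ ∈ q.roots := Multiset.count_pos.mp (by omega)
    have hmult : 2 ≤ rootMultiplicity ξ q := by
      rw [count_roots] at hcnt
      omega
    have hdvd : (X - C ξ)^2 ∣ q :=
      dvd_trans (pow_dvd_pow _ hmult) (pow_rootMultiplicity_dvd q ξ)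
    obtain ⟨t, ht⟩ := hdvd
    have heval : eval ξ q = 0 := by rw [ht]; simp
    have hder : eval ξ (derivative q) = 0 := by
      rw [ht]
      simp [derivative_mul, derivative_pow]
    obtain ⟨him, h1⟩ := htrans ξ heval
    have h2 : eval ξ.re (derivative (Dpoly V p)) = 0 := by
      rw [hq, show derivative ((Dpoly V p).map (algebraMap ℝ ℂ))
        = (derivative (Dpoly V p)).map (algebraMap ℝ ℂ) from (Polynomial.derivative_map _ _),
        hcast (derivative (Dpoly V p)) ξ him] at hder
      exact_mod_cast hder
    exact deriv_ne_zero V p hp ξ.re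
      (by rw [discriminant_eval, h1]; norm_num) h2
  set F : Finset ℝ := (q.roots.toFinset).image Complex.re with hF
  have hcardF : F.card = p := by
    rw [hF, Finset.card_image_of_injOn, Multiset.toFinset_card_of_nodup hnodup, hcard]
    intro x hx y hy hxy
    apply Complex.ext hxy
    rw [hroots_im x (Multiset.mem_toFinset.mp hx), hroots_im y (Multiset.mem_toFinset.mp hy)]
  have hFroot : ∀ x ∈ F, eval x (Dpoly V p) = 0 := by
    intro x hx
    obtain ⟨ξ, hξ, hre⟩ := Finset.mem_image.mp hx
    have hmem := Multiset.mem_toFinset.mp hξ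
    obtain ⟨him, h1⟩ := htrans ξ ((mem_roots hq0).mp hmem)
    rwa [hre] at h1
  refine ⟨fun i => ((F.orderIsoOfFin hcardF) i : ℝ), ?_, ?_⟩
  · intro i j hij
    exact (F.orderIsoOfFin hcardF).strictMono hij
  · intro i
    exact hFroot _ ((F.orderIsoOfFin hcardF) i).2


lemma two_le_rootMultiplicity (q : ℝ[X]) (hq : q ≠ 0) (y : ℝ)
    (h0 : eval y q = 0) (h1 : eval y (derivative q) = 0) : 2 ≤ rootMultiplicity y q := by
  rw [Polynomial.le_rootMultiplicity_iff hq]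
  obtain ⟨s, hs⟩ := dvd_iff_isRoot.mpr h0
  have hd := congrArg derivative hs
  rw [derivative_mul, derivative_sub, derivative_X, derivative_C, sub_zero, one_mul] at hd
  have h2 := congrArg (eval y) hd
  rw [h1, eval_add, eval_mul, eval_sub, eval_X, eval_C, sub_self, zero_mul, add_zero] at h2
  obtain ⟨t, ht⟩ := dvd_iff_isRoot.mpr h2.symm
  exact ⟨t, by rw [hs, ht]; ring⟩

end Statement10Aux

open Statement10Aux Polynomial Set Filter in
/-- For a `p`-periodic potential `V` (`p ≥ 1`) with discriminant
`Δ`, the set `{E : |Δ(E)| ≤ 2}` is a union of `p` closed intervals with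
nonempty interior (the bands) such that on each band `Δ` is strictly monotone
(increasing or decreasing) and `Δ` maps each band onto `[-2, 2]`. -/
theorem statement10
    (p : ℕ) (hp : 1 ≤ p) (V : ℤ → ℝ) (hV : ∀ n : ℤ, V (n + p) = V n) :
    ∃ a b : Fin p → ℝ, (∀ i, a i < b i) ∧
      {E : ℝ | |discriminant V p E| ≤ 2} = ⋃ i, Set.Icc (a i) (b i) ∧
      (∀ i, StrictMonoOn (discriminant V p) (Set.Icc (a i) (b i)) ∨
            StrictAntiOn (discriminant V p) (Set.Icc (a i) (b i))) ∧
      (∀ i, discriminant V p '' Set.Icc (a i) (b i) = Set.Icc (-2 : ℝ) 2) := by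
  classical
  set f : ℝ → ℝ := discriminant V p with hfdef
  have hfeq : f = fun x => eval x (Dpoly V p) := funext fun x => discriminant_eval V p x
  have hcont : Continuous f := by rw [hfeq]; exact (Dpoly V p).continuous
  have hderiv : ∀ x, deriv f x = eval x (derivative (Dpoly V p)) := by
    intro x; rw [hfeq]; exact Polynomial.deriv (𝕜 := ℝ) _
  have hdne : ∀ x, |f x| < 2 → eval x (derivative (Dpoly V p)) ≠ 0 :=
    fun x hx => deriv_ne_zero V p hp x hx
  obtain ⟨r, hrmono, hrroot⟩ := exists_sorted_roots V p hp hV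
  have hr0 : ∀ i, f (r i) = 0 := by
    intro i; rw [hfeq]; exact hrroot i
  -- escape to ±∞
  have hdegpos : 0 < (Dpoly V p).degree := by
    rw [Dpoly_degree V p hp]
    exact_mod_cast Nat.pos_of_ne_zero (by omega)
  have htopE : ∀ c : ℝ, ∃ x, c < x ∧ 2 ≤ |f x| := by
    intro c
    have h1 := Polynomial.abs_tendsto_atTop (Dpoly V p) hdegpos
    obtain ⟨x, hx1, hx2⟩ := ((h1.eventually_ge_atTop 2).and (eventually_gt_atTop c)).exists
    exact ⟨x, hx2, by rw [hfeq]; exact hx1⟩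
  have hbotE : ∀ c : ℝ, ∃ x, x < c ∧ 2 ≤ |f x| := by
    intro c
    set Q := (Dpoly V p).comp (-X) with hQ
    have hQdeg : 0 < Q.degree := by
      have h3 : Q.natDegree = p := by
        rw [hQ, natDegree_comp]
        simp [natDegree_neg, natDegree_X, Dpoly_natDegree V p hp]
      rw [← natDegree_pos_iff_degree_pos, h3]
      omega
    have h1 := Polynomial.abs_tendsto_atTop Q hQdeg
    obtain ⟨x, hx1, hx2⟩ := ((h1.eventually_ge_atTop 2).and (eventually_gt_atTop (-c))).exists
    refine ⟨-x, by linarith, ?_⟩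
    have h4 : eval x Q = eval (-x) (Dpoly V p) := by rw [hQ, eval_comp]; simp
    rw [hfeq]
    rw [h4] at hx1
    exact hx1
  -- band endpoints
  set a : Fin p → ℝ := fun i => sSup {x | x ≤ r i ∧ |f x| = 2} with hadef
  set b : Fin p → ℝ := fun i => sInf {x | r i ≤ x ∧ |f x| = 2} with hbdef
  have habs_cont : Continuous fun x => |f x| := hcont.abs
  have haA : ∀ i, a i ≤ r i ∧ |f (a i)| = 2 := by
    intro i
    have hclosed : IsClosed {x | x ≤ r i ∧ |f x| = 2} := by
      apply IsClosed.inter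
      · exact isClosed_Iic
      · exact isClosed_eq habs_cont continuous_const
    have hne : {x | x ≤ r i ∧ |f x| = 2}.Nonempty := by
      obtain ⟨x, hx1, hx2⟩ := hbotE (r i)
      have h5 : (2:ℝ) ∈ Icc (|f (r i)|) (|f x|) := by
        constructor
        · rw [hr0 i]; norm_num
        · exact hx2
      obtain ⟨t, ht1, ht2⟩ := intermediate_value_Icc' hx1.le habs_cont.continuousOn h5
      exact ⟨t, ht1.2, ht2⟩
    have hbdd : BddAbove {x | x ≤ r i ∧ |f x| = 2} := ⟨r i, fun x hx => hx.1⟩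
    exact hclosed.csSup_mem hne hbdd
  have hamax : ∀ i x, x ≤ r i → |f x| = 2 → x ≤ a i := by
    intro i x h1 h2
    exact le_csSup ⟨r i, fun y hy => hy.1⟩ ⟨h1, h2⟩
  have hbB : ∀ i, r i ≤ b i ∧ |f (b i)| = 2 := by
    intro i
    have hclosed : IsClosed {x | r i ≤ x ∧ |f x| = 2} := by
      apply IsClosed.inter
      · exact isClosed_Ici
      · exact isClosed_eq habs_cont continuous_const
    have hne : {x | r i ≤ x ∧ |f x| = 2}.Nonempty := by
      obtain ⟨x, hx1, hx2⟩ := htopE (r i)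
      have h5 : (2:ℝ) ∈ Icc (|f (r i)|) (|f x|) := by
        constructor
        · rw [hr0 i]; norm_num
        · exact hx2
      obtain ⟨t, ht1, ht2⟩ := intermediate_value_Icc hx1.le habs_cont.continuousOn h5
      exact ⟨t, ht1.1, ht2⟩
    have hbdd : BddBelow {x | r i ≤ x ∧ |f x| = 2} := ⟨r i, fun x hx => hx.1⟩
    exact hclosed.csInf_mem hne hbdd
  have hbmin : ∀ i x, r i ≤ x → |f x| = 2 → b i ≤ x := by
    intro i x h1 h2
    exact csInf_le ⟨r i, fun y hy => hy.1⟩ ⟨h1, h2⟩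
  have halt : ∀ i, a i < r i := by
    intro i
    rcases lt_or_eq_of_le (haA i).1 with h | h
    · exact h
    · exfalso
      have := (haA i).2
      rw [h, hr0 i] at this
      norm_num at this
  have hblt : ∀ i, r i < b i := by
    intro i
    rcases lt_or_eq_of_le (hbB i).1 with h | h
    · exact h
    · exfalso
      have := (hbB i).2
      rw [← h, hr0 i] at this
      norm_num at this
  have hab : ∀ i, a i < b i := fun i => lt_trans (halt i) (hblt i)
  -- inside a band, |f| < 2 strictly in the interior
  have hIoo : ∀ i x, x ∈ Ioo (a i) (b i) → |f x| < 2 := by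
    intro i x hx
    by_contra hge
    push_neg at hge
    rcases le_or_gt x (r i) with h1 | h1
    · have hxr : x < r i := by
        rcases lt_or_eq_of_le h1 with h | h
        · exact h
        · exfalso; rw [h, hr0 i] at hge; norm_num at hge
      have h5 : (2:ℝ) ∈ Icc (|f (r i)|) (|f x|) := ⟨by rw [hr0 i]; norm_num, hge⟩
      obtain ⟨t, ht1, ht2⟩ := intermediate_value_Icc' hxr.le habs_cont.continuousOn h5
      exact absurd (hamax i t ht1.2 ht2) (not_le.mpr (lt_of_lt_of_le hx.1 ht1.1))
    · have h5 : (2:ℝ) ∈ Icc (|f (r i)|) (|f x|) := ⟨by rw [hr0 i]; norm_num, hge⟩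
      obtain ⟨t, ht1, ht2⟩ := intermediate_value_Icc h1.le habs_cont.continuousOn h5
      exact absurd (hbmin i t ht1.1 ht2) (not_le.mpr (lt_of_le_of_lt ht1.2 hx.2))
  have hIcc : ∀ i x, x ∈ Icc (a i) (b i) → |f x| ≤ 2 := by
    intro i x hx
    rcases eq_or_lt_of_le hx.1 with h1 | h1
    · rw [← h1]; exact le_of_eq (haA i).2
    rcases eq_or_lt_of_le hx.2 with h2 | h2
    · rw [h2]; exact le_of_eq (hbB i).2
    · exact le_of_lt (hIoo i x ⟨h1, h2⟩)
  -- monotonicity on bands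
  have hmono : ∀ i, StrictMonoOn f (Icc (a i) (b i)) ∨ StrictAntiOn f (Icc (a i) (b i)) := by
    intro i
    have hne : ∀ x ∈ Ioo (a i) (b i), eval x (derivative (Dpoly V p)) ≠ 0 :=
      fun x hx => hdne x (hIoo i x hx)
    have hcont' : Continuous fun x => eval x (derivative (Dpoly V p)) :=
      (derivative (Dpoly V p)).continuous
    by_cases hpos : ∀ x ∈ Ioo (a i) (b i), 0 < eval x (derivative (Dpoly V p))
    · left
      apply strictMonoOn_of_deriv_pos (convex_Icc _ _) hcont.continuousOn
      intro x hx
      rw [interior_Icc] at hx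
      rw [hderiv]
      exact hpos x hx
    · right
      push_neg at hpos
      obtain ⟨x0, hx0, hx0le⟩ := hpos
      have hx0lt : eval x0 (derivative (Dpoly V p)) < 0 :=
        lt_of_le_of_ne hx0le (hne x0 hx0)
      have hneg : ∀ x ∈ Ioo (a i) (b i), eval x (derivative (Dpoly V p)) < 0 := by
        intro x hx
        by_contra hge
        push_neg at hge
        have hxgt : 0 < eval x (derivative (Dpoly V p)) :=
          lt_of_le_of_ne hge (Ne.symm (hne x hx))
        rcases le_total x0 x with h | h
        · have h5 : (0:ℝ) ∈ Icc (eval x0 (derivative (Dpoly V p)))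
              (eval x (derivative (Dpoly V p))) := ⟨hx0lt.le, hxgt.le⟩
          obtain ⟨t, ht1, ht2⟩ := intermediate_value_Icc h hcont'.continuousOn h5
          have htIoo : t ∈ Ioo (a i) (b i) :=
            ⟨lt_of_lt_of_le hx0.1 ht1.1, lt_of_le_of_lt ht1.2 hx.2⟩
          exact hne t htIoo ht2
        · have h5 : (0:ℝ) ∈ Icc (eval x0 (derivative (Dpoly V p)))
              (eval x (derivative (Dpoly V p))) := ⟨hx0lt.le, hxgt.le⟩
          obtain ⟨t, ht1, ht2⟩ := intermediate_value_Icc' h hcont'.continuousOn h5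
          have htIoo : t ∈ Ioo (a i) (b i) :=
            ⟨lt_of_lt_of_le hx.1 ht1.1, lt_of_le_of_lt ht1.2 hx0.2⟩
          exact hne t htIoo ht2
      apply strictAntiOn_of_deriv_neg (convex_Icc _ _) hcont.continuousOn
      intro x hx
      rw [interior_Icc] at hx
      rw [hderiv]
      exact hneg x hx
  have hmemIcc : ∀ i, a i ∈ Icc (a i) (b i) ∧ r i ∈ Icc (a i) (b i) ∧ b i ∈ Icc (a i) (b i) :=
    fun i => ⟨⟨le_refl _, (hab i).le⟩, ⟨(halt i).le, (hblt i).le⟩, ⟨(hab i).le, le_refl _⟩⟩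
  have hends : ∀ i, (f (a i) = -2 ∧ f (b i) = 2) ∨ (f (a i) = 2 ∧ f (b i) = -2) := by
    intro i
    have h2a : f (a i) = 2 ∨ f (a i) = -2 := (abs_eq (by norm_num)).mp (haA i).2
    have h2b : f (b i) = 2 ∨ f (b i) = -2 := (abs_eq (by norm_num)).mp (hbB i).2
    obtain ⟨hm1, hm2, hm3⟩ := hmemIcc i
    rcases hmono i with h | h
    · left
      have ha0 : f (a i) < 0 := by
        have := h hm1 hm2 (halt i)
        rw [hr0 i] at this
        exact this
      have hb0 : 0 < f (b i) := by
        have := h hm2 hm3 (hblt i)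
        rw [hr0 i] at this
        exact this
      constructor
      · rcases h2a with h' | h' <;> [linarith; exact h']
      · rcases h2b with h' | h' <;> [exact h'; linarith]
    · right
      have ha0 : 0 < f (a i) := by
        have := h hm1 hm2 (halt i)
        rw [hr0 i] at this
        exact this
      have hb0 : f (b i) < 0 := by
        have := h hm2 hm3 (hblt i)
        rw [hr0 i] at this
        exact this
      constructor
      · rcases h2a with h' | h' <;> [exact h'; linarith]
      · rcases h2b with h' | h' <;> [linarith; exact h']
  have himg : ∀ i, f '' Icc (a i) (b i) = Icc (-2:ℝ) 2 := by
    intro i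
    apply Set.Subset.antisymm
    · rintro y ⟨x, hx, rfl⟩
      exact abs_le.mp (hIcc i x hx)
    · rcases hends i with ⟨h1, h2⟩ | ⟨h1, h2⟩
      · have := intermediate_value_Icc (hab i).le hcont.continuousOn
        rwa [h1, h2] at this
      · have := intermediate_value_Icc' (hab i).le hcont.continuousOn
        rwa [h1, h2] at this
  have horder : ∀ i j : Fin p, i < j → b i ≤ a j := by
    intro i j hij
    have h1 : b i ≤ r j := by
      by_contra hgt
      push_neg at hgt
      have hrij : r i < r j := hrmono hij
      have hmem1 : r i ∈ Icc (a i) (b i) := (hmemIcc i).2.1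
      have hmem2 : r j ∈ Icc (a i) (b i) :=
        ⟨le_of_lt (lt_trans (halt i) hrij), hgt.le⟩
      have hne' : r i ≠ r j := ne_of_lt hrij
      have heq : f (r i) = f (r j) := by rw [hr0 i, hr0 j]
      rcases hmono i with h | h
      · exact hne' (h.injOn hmem1 hmem2 heq)
      · exact hne' (h.injOn hmem1 hmem2 heq)
    exact hamax j (b i) h1 (hbB i).2
  have hamono : ∀ i j : Fin p, i ≤ j → a i ≤ a j := by
    intro i j hij
    rcases eq_or_lt_of_le hij with h | h
    · rw [h]
    · exact le_trans (le_trans (hab i).le (horder i j h)) (le_refl _)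
  have hbmono : ∀ i j : Fin p, i ≤ j → b i ≤ b j := by
    intro i j hij
    rcases eq_or_lt_of_le hij with h | h
    · rw [h]
    · exact le_trans (horder i j h) (hab j).le
  -- every point with |f| < 2 lies in a band
  have hUsub : ∀ E, |f E| < 2 → ∃ i, E ∈ Icc (a i) (b i) := by
    intro E hE
    by_contra hnone
    push_neg at hnone
    set c := f E with hc
    have hcmem : c ∈ Icc (-2:ℝ) 2 := abs_le.mp hE.le
    have hex : ∀ i : Fin p, ∃ x, x ∈ Ioo (a i) (b i) ∧ f x = c := by
      intro i
      have := himg i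
      rw [← this] at hcmem
      obtain ⟨x, hx, hfx⟩ := hcmem
      refine ⟨x, ⟨?_, ?_⟩, hfx⟩
      · rcases eq_or_lt_of_le hx.1 with h | h
        · exfalso
          rw [← h] at hfx
          have := (haA i).2
          rw [hfx] at this
          rw [← this] at hE
          exact lt_irrefl _ hE
        · exact h
      · rcases eq_or_lt_of_le hx.2 with h | h
        · exfalso
          rw [h] at hfx
          have := (hbB i).2
          rw [hfx] at this
          rw [← this] at hE
          exact lt_irrefl _ hE
        · exact h
    choose ρ hρIoo hρval using hex
    set q2 : ℝ[X] := Dpoly V p - C c with hq2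
    have hq2ne : q2 ≠ 0 := by
      intro h0
      have h1 : Dpoly V p = C c := by
        have := sub_eq_zero.mp h0
        exact this
      have h2 := Dpoly_natDegree V p hp
      rw [h1, natDegree_C] at h2
      omega
    have hq2deg : q2.natDegree ≤ p := by
      refine le_trans (natDegree_sub_le _ _) ?_
      simp [natDegree_C, Dpoly_natDegree V p hp]
    have hρmono : StrictMono ρ := by
      intro i j hij
      exact lt_of_lt_of_le (hρIoo i).2 (le_trans (horder i j hij) (hρIoo j).1.le)
    have hroot : ∀ x, f x = c → IsRoot q2 x := by
      intro x hx
      show eval x q2 = 0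
      rw [hq2, eval_sub, eval_C]
      have h8 : eval x (Dpoly V p) = f x := by rw [hfeq]
      rw [h8, hx, sub_self]
    have hEroot : IsRoot q2 E := hroot E rfl
    have hEnot : E ∉ Finset.image ρ Finset.univ := by
      intro hmem
      obtain ⟨i, _, hi⟩ := Finset.mem_image.mp hmem
      exact hnone i (by rw [← hi]; exact Set.Ioo_subset_Icc_self (hρIoo i))
    have hcardF2 : (insert E (Finset.image ρ Finset.univ)).card = p + 1 := by
      rw [Finset.card_insert_of_notMem hEnot,
        Finset.card_image_of_injective _ hρmono.injective, Finset.card_univ, Fintype.card_fin]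
    have hsub : insert E (Finset.image ρ Finset.univ) ⊆ q2.roots.toFinset := by
      intro x hx
      rw [Multiset.mem_toFinset, mem_roots hq2ne]
      rcases Finset.mem_insert.mp hx with h | h
      · rw [h]; exact hEroot
      · obtain ⟨i, _, hi⟩ := Finset.mem_image.mp h
        rw [← hi]; exact hroot (ρ i) (hρval i)
    have h5 := Finset.card_le_card hsub
    have h6 := Multiset.toFinset_card_le q2.roots
    have h7 := q2.card_roots'
    omega
  -- points with |f| = 2 outside all bands are impossible
  have hedge : ∀ E0, |f E0| = 2 → (∀ i, E0 ∉ Icc (a i) (b i)) → False := by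
    intro E0 habs2 hnone
    have hout : ∀ x, (∀ i : Fin p, x ∉ Icc (a i) (b i)) → 2 ≤ |f x| := by
      intro x hx
      by_contra hlt
      push_neg at hlt
      obtain ⟨i, hi⟩ := hUsub x hlt
      exact hx i hi
    have hWopen : IsOpen (⋃ i, Icc (a i) (b i))ᶜ :=
      (isClosed_iUnion_of_finite fun i => isClosed_Icc).isOpen_compl
    have hE0W : E0 ∈ (⋃ i, Icc (a i) (b i))ᶜ := by
      simp only [Set.mem_compl_iff, Set.mem_iUnion, not_exists]
      exact hnone
    have houtW : ∀ x, x ∈ (⋃ i, Icc (a i) (b i))ᶜ → 2 ≤ |f x| := by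
      intro x hx
      simp only [Set.mem_compl_iff, Set.mem_iUnion, not_exists] at hx
      exact hout x hx
    have hc0 : f E0 = 2 ∨ f E0 = -2 := (abs_eq (by norm_num)).mp habs2
    have hE0crit : eval E0 (derivative (Dpoly V p)) = 0 := by
      rw [← hderiv]
      rcases hc0 with h | h
      · apply IsLocalMin.deriv_eq_zero
        have hW' : IsOpen ((⋃ i, Icc (a i) (b i))ᶜ ∩ f ⁻¹' (Ioi 0)) :=
          hWopen.inter (isOpen_Ioi.preimage hcont)
        have hmem : E0 ∈ (⋃ i, Icc (a i) (b i))ᶜ ∩ f ⁻¹' (Ioi 0) :=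
          ⟨hE0W, by simp only [Set.mem_preimage, Set.mem_Ioi, h]; norm_num⟩
        apply Filter.eventually_of_mem (hW'.mem_nhds hmem)
        intro x hx
        have h2 := houtW x hx.1
        have h3 : 0 < f x := hx.2
        rw [abs_of_pos h3] at h2
        rw [h]
        exact h2
      · apply IsLocalMax.deriv_eq_zero
        have hW' : IsOpen ((⋃ i, Icc (a i) (b i))ᶜ ∩ f ⁻¹' (Iio 0)) :=
          hWopen.inter (isOpen_Iio.preimage hcont)
        have hmem : E0 ∈ (⋃ i, Icc (a i) (b i))ᶜ ∩ f ⁻¹' (Iio 0) :=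
          ⟨hE0W, by simp only [Set.mem_preimage, Set.mem_Iio, h]; norm_num⟩
        apply Filter.eventually_of_mem (hW'.mem_nhds hmem)
        intro x hx
        have h2 := houtW x hx.1
        have h3 : f x < 0 := hx.2
        rw [abs_of_neg h3] at h2
        rw [h]
        linarith
    set c0 := f E0 with hc0def
    set q2 : ℝ[X] := Dpoly V p - C c0 with hq2
    have hq2ne : q2 ≠ 0 := by
      intro h0
      have h1 : Dpoly V p = C c0 := sub_eq_zero.mp h0
      have h2 := Dpoly_natDegree V p hp
      rw [h1, natDegree_C] at h2
      omega
    have hq2deg : q2.natDegree ≤ p := by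
      refine le_trans (natDegree_sub_le _ _) ?_
      simp [natDegree_C, Dpoly_natDegree V p hp]
    have hD'q2 : derivative q2 = derivative (Dpoly V p) := by
      rw [hq2, derivative_sub, derivative_C, sub_zero]
    have hroot : ∀ x, f x = c0 → IsRoot q2 x := by
      intro x hx
      show eval x q2 = 0
      rw [hq2, eval_sub, eval_C]
      have h8 : eval x (Dpoly V p) = f x := by rw [hfeq]
      rw [h8, hx, sub_self]
    set e : Fin p → ℝ := fun i => if f (a i) = c0 then a i else b i with he
    have heval : ∀ i, f (e i) = c0 ∧ (e i = a i ∨ e i = b i) := by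
      intro i
      by_cases hcase : f (a i) = c0
      · constructor
        · show f (if f (a i) = c0 then a i else b i) = c0
          rw [if_pos hcase]
          exact hcase
        · left
          show (if f (a i) = c0 then a i else b i) = a i
          rw [if_pos hcase]
      · have hbval : f (b i) = c0 := by
          rcases hends i with ⟨h1, h2⟩ | ⟨h1, h2⟩ <;> rcases hc0 with h3 | h3
          · rw [h2, h3]
          · exact absurd (h1.trans h3.symm) hcase
          · exact absurd (h1.trans h3.symm) hcase
          · rw [h2, h3]
        constructor
        · show f (if f (a i) = c0 then a i else b i) = c0
          rw [if_neg hcase]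
          exact hbval
        · right
          show (if f (a i) = c0 then a i else b i) = b i
          rw [if_neg hcase]
    have hemem : ∀ i, e i ∈ Icc (a i) (b i) := by
      intro i
      rcases (heval i).2 with h | h <;> rw [h]
      exacts [(hmemIcc i).1, (hmemIcc i).2.2]
    have hpair : ∀ i j : Fin p, i < j → e i = e j → e i = b i ∧ e j = a j ∧ b i = a j := by
      intro i j hij heq
      have h1 : a j ≤ e j := (hemem j).1
      have h2 : e i ≤ b i := (hemem i).2
      have h3 : b i ≤ a j := horder i j hij
      have h4 : e i = b i := le_antisymm h2 (by rw [heq]; linarith)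
      have h5 : e j = a j := le_antisymm (by rw [← heq]; linarith) h1
      exact ⟨h4, h5, by rw [← h4, heq, h5]⟩
    have htouch : ∀ i j : Fin p, i < j → e i = e j →
        eval (e i) (derivative (Dpoly V p)) = 0 := by
      intro i j hij heq
      obtain ⟨h4, h5, h6⟩ := hpair i j hij heq
      have hyval : f (b i) = c0 := by rw [← h4]; exact (heval i).1
      rw [h4, ← hderiv]
      have hWy : ∀ x, x ∈ Ioo (a i) (b j) → |f x| ≤ 2 := by
        intro x hx
        rcases le_total x (b i) with hle | hle
        · exact hIcc i x ⟨hx.1.le, hle⟩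
        · exact hIcc j x ⟨by rw [← h6]; exact hle, hx.2.le⟩
      have hnbhd : Ioo (a i) (b j) ∈ nhds (b i) :=
        isOpen_Ioo.mem_nhds ⟨hab i, by rw [h6]; exact hab j⟩
      rcases hc0 with h | h
      · apply IsLocalMax.deriv_eq_zero
        apply Filter.eventually_of_mem hnbhd
        intro x hx
        have h9 := hWy x hx
        have h10 : f x ≤ 2 := le_trans (le_abs_self _) h9
        rw [hyval, h]
        exact h10
      · apply IsLocalMin.deriv_eq_zero
        apply Filter.eventually_of_mem hnbhd
        intro x hx
        have h9 := hWy x hx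
        have h10 : -2 ≤ f x := neg_le_of_abs_le h9
        rw [hyval, h]
        exact h10
    have hE0root : IsRoot q2 E0 := hroot E0 rfl
    have hcount : ∀ y ∈ Finset.image e Finset.univ,
        (Finset.univ.filter fun i => e i = y).card ≤ q2.roots.count y := by
      intro y hy
      obtain ⟨i0, _, hi0⟩ := Finset.mem_image.mp hy
      have hyroot : y ∈ q2.roots := by
        rw [mem_roots hq2ne, ← hi0]
        exact hroot (e i0) (heval i0).1
      rcases le_or_gt ((Finset.univ.filter fun i => e i = y).card) 1 with hc | hc
      · exact le_trans hc (Multiset.count_pos.mpr hyroot)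
      · obtain ⟨i, hi, j, hj, hij⟩ := Finset.one_lt_card.mp hc
        rw [Finset.mem_filter] at hi hj
        have hcrit : eval y (derivative (Dpoly V p)) = 0 := by
          rcases hij.lt_or_gt with hlt | hlt
          · have := htouch i j hlt (hi.2.trans hj.2.symm)
            rwa [hi.2] at this
          · have := htouch j i hlt (hj.2.trans hi.2.symm)
            rwa [hj.2] at this
        have hkey2 : 2 ≤ q2.roots.count y := by
          rw [count_roots]
          exact two_le_rootMultiplicity q2 hq2ne y ((mem_roots hq2ne).mp hyroot)
            (by rw [hD'q2]; exact hcrit)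
        have hcard2 : (Finset.univ.filter fun i => e i = y).card ≤ 2 := by
          by_contra h3
          push_neg at h3
          obtain ⟨s', hs, t', ht, u', hu, hst, hsu, htu⟩ := Finset.two_lt_card.mp h3
          rw [Finset.mem_filter] at hs ht hu
          have key3 : ∀ m n k : Fin p, m < n → n < k → e m = y → e n = y → e k = y → False := by
            intro m n k h1 h2 hm hn hk
            obtain ⟨_, h5, _⟩ := hpair m n h1 (hm.trans hn.symm)
            obtain ⟨h4', _, _⟩ := hpair n k h2 (hn.trans hk.symm)
            have h9 := hab n
            rw [← h5, h4'] at h9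
            exact lt_irrefl _ h9
          rcases lt_trichotomy s' t' with h1 | h1 | h1
          · rcases lt_trichotomy t' u' with h2 | h2 | h2
            · exact key3 s' t' u' h1 h2 hs.2 ht.2 hu.2
            · exact htu h2
            · rcases lt_trichotomy s' u' with h4 | h4 | h4
              · exact key3 s' u' t' h4 h2 hs.2 hu.2 ht.2
              · exact hsu h4
              · exact key3 u' s' t' h4 h1 hu.2 hs.2 ht.2
          · exact hst h1
          · rcases lt_trichotomy s' u' with h2 | h2 | h2
            · exact key3 t' s' u' h1 h2 ht.2 hs.2 hu.2
            · exact hsu h2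
            · rcases lt_trichotomy t' u' with h4 | h4 | h4
              · exact key3 t' u' s' h4 h2 ht.2 hu.2 hs.2
              · exact htu h4
              · exact key3 u' t' s' h4 h1 hu.2 ht.2 hs.2
        omega
    have hE0notim : E0 ∉ Finset.image e Finset.univ := by
      intro hmem
      obtain ⟨i, _, hi⟩ := Finset.mem_image.mp hmem
      exact hnone i (hi ▸ hemem i)
    have hsubS : insert E0 (Finset.image e Finset.univ) ⊆ q2.roots.toFinset := by
      intro x hx
      rw [Multiset.mem_toFinset, mem_roots hq2ne]
      rcases Finset.mem_insert.mp hx with h | h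
      · rw [h]; exact hE0root
      · obtain ⟨i, _, hi⟩ := Finset.mem_image.mp h
        rw [← hi]; exact hroot (e i) (heval i).1
    have hsum1 : ∑ y ∈ insert E0 (Finset.image e Finset.univ), q2.roots.count y
        ≤ Multiset.card q2.roots := by
      calc ∑ y ∈ insert E0 (Finset.image e Finset.univ), q2.roots.count y
          ≤ ∑ y ∈ q2.roots.toFinset, q2.roots.count y :=
            Finset.sum_le_sum_of_subset hsubS
        _ = Multiset.card q2.roots := Multiset.toFinset_sum_count_eq _
    have hsum2 : p + 2 ≤ ∑ y ∈ insert E0 (Finset.image e Finset.univ), q2.roots.count y := by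
      rw [Finset.sum_insert hE0notim]
      have hcE0 : 2 ≤ q2.roots.count E0 := by
        rw [count_roots]
        exact two_le_rootMultiplicity q2 hq2ne E0 hE0root (by rw [hD'q2]; exact hE0crit)
      have hcountp : p ≤ ∑ y ∈ Finset.image e Finset.univ, q2.roots.count y := by
        have h1 : (Finset.univ : Finset (Fin p)).card
            = ∑ y ∈ Finset.image e Finset.univ, (Finset.univ.filter fun i => e i = y).card :=
          Finset.card_eq_sum_card_image e Finset.univ
        rw [Finset.card_univ, Fintype.card_fin] at h1
        calc p = ∑ y ∈ Finset.image e Finset.univ,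
            (Finset.univ.filter fun i => e i = y).card := h1
          _ ≤ ∑ y ∈ Finset.image e Finset.univ, q2.roots.count y := Finset.sum_le_sum hcount
      omega
    have h7 := q2.card_roots'
    omega
  -- final assembly
  refine ⟨a, b, hab, ?_, hmono, himg⟩
  ext E
  simp only [Set.mem_setOf_eq, Set.mem_iUnion]
  constructor
  · intro hE
    rcases lt_or_eq_of_le hE with h | h
    · exact hUsub E h
    · by_contra hnone
      push_neg at hnone
      exact hedge E h hnone
  · rintro ⟨i, hi⟩
    exact hIcc i E hi
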